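/- Let k be an even positive integer and H > 1 a real constant. Define cost vectors c^t ∈ ℝ^k for t = 1,…,k/2 by c^t_i = 0 if i ∈ {2t−1, 2t} and c^t_i = H otherwise. Then for every deterministic prediction algorithm A — i.e., every family of functions that, at each step t, outputs a predicted arm p_t ∈ {1,…,k} as a function of the cost vectors c^1,…,c^t and the agent's past actions a_1,…,a_{t−1} — there exist a value vector v* ∈ {0,1}^k with exactly one coordinate of each pair {2t−1, 2t} equal to 1, and an agent action sequence a_1,…,a_{k/2} achieving zero total regret (a_t = argmax_i (v*_i − c^t_i) for all t), such that the algorithm's total regret satisfies ∑_{t ≤ k/2} pr_t ≥ k/4, where pr_t = max_i (v*_i − c^t_i) − (v*_{p_t} − c^t_{p_t}). -/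

import Mathlib

/-- The cost sequence of the lower-bound construction: at (0-indexed) time step `t`,
the two arms of the `t`-th pair (indices `2t` and `2t+1`) have cost `0` and every other
arm has cost `H`. -/
def lbCost (k : ℕ) (H : ℝ) : ℕ → Fin k → ℝ := fun t i =>
  if (i : ℕ) = 2 * t ∨ (i : ℕ) = 2 * t + 1 then 0 else H

/-- The adversarial agent's step: play the arm of pair `t` that the predictor does not pick. -/
def lbStep (k : ℕ) (hk : 0 < k) (H : ℝ)
    (A : ℕ → (ℕ → Fin k → ℝ) → (ℕ → Fin k) → Fin k) (t : ℕ) (prev : ℕ → Fin k) : Fin k :=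
  if h : 2 * t + 1 < k then
    if A t (lbCost k H) prev = (⟨2 * t, by omega⟩ : Fin k) then ⟨2 * t + 1, h⟩
    else ⟨2 * t, by omega⟩
  else ⟨0, hk⟩

/-- Prefix of agent actions. -/
def lbActs (k : ℕ) (hk : 0 < k) (H : ℝ)
    (A : ℕ → (ℕ → Fin k → ℝ) → (ℕ → Fin k) → Fin k) : ℕ → ℕ → Fin k
  | 0 => fun _ => ⟨0, hk⟩
  | t + 1 => fun s => if s = t then lbStep k hk H A t (lbActs k hk H A t) else lbActs k hk H A t s

/-- The agent's action sequence. -/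
def lbA (k : ℕ) (hk : 0 < k) (H : ℝ)
    (A : ℕ → (ℕ → Fin k → ℝ) → (ℕ → Fin k) → Fin k) : ℕ → Fin k :=
  fun t => lbActs k hk H A (t + 1) t

lemma lbActs_agree (k : ℕ) (hk : 0 < k) (H : ℝ)
    (A : ℕ → (ℕ → Fin k → ℝ) → (ℕ → Fin k) → Fin k) :
    ∀ t s, s < t → lbActs k hk H A t s = lbA k hk H A s := by
  intro t
  induction t with
  | zero => intro s hs; omega
  | succ t ih =>
    intro s hs
    by_cases h : s = t
    · subst h
      simp [lbA, lbActs]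
    · have : s < t := by omega
      simp only [lbActs, if_neg h]
      exact ih s this

/-- Theorem 3 (lower bound): for every deterministic prediction algorithm `A` — mapping,
at each step `t`, the costs up to time `t` and the agent's actions before time `t` to a
predicted arm — there exist a 0/1 value vector `v*` with exactly one `1` in each pair
`{2t, 2t+1}` and a zero-regret agent action sequence such that the algorithm's total
prediction regret over the first `k/2` steps is at least `k/4`. -/
theorem stmt_10 (k : ℕ) (hk : 0 < k) (hkeven : Even k) (H : ℝ) (hH : 1 < H)
    (A : ℕ → (ℕ → Fin k → ℝ) → (ℕ → Fin k) → Fin k)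
    (hA : ∀ (t : ℕ) (c c' : ℕ → Fin k → ℝ) (a a' : ℕ → Fin k),
      (∀ s, s ≤ t → c s = c' s) → (∀ s, s < t → a s = a' s) → A t c a = A t c' a') :
    ∃ (vstar : Fin k → ℝ) (a : ℕ → Fin k),
      (∀ i, vstar i = 0 ∨ vstar i = 1) ∧
      (∀ t, t < k / 2 → ∀ (h1 : 2 * t < k) (h2 : 2 * t + 1 < k),
        vstar ⟨2 * t, h1⟩ + vstar ⟨2 * t + 1, h2⟩ = 1) ∧
      (∀ t, t < k / 2 → ∀ i,
        vstar (a t) - lbCost k H t (a t) ≥ vstar i - lbCost k H t i) ∧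
      (k : ℝ) / 4 ≤ ∑ t ∈ Finset.range (k / 2),
        ((⨆ i, (vstar i - lbCost k H t i))
          - (vstar (A t (lbCost k H) a) - lbCost k H t (A t (lbCost k H) a))) := by
  haveI : Nonempty (Fin k) := ⟨⟨0, hk⟩⟩
  obtain ⟨m, hm⟩ := hkeven
  have hk2 : k = 2 * m := by omega
  set a : ℕ → Fin k := lbA k hk H A with ha
  set vstar : Fin k → ℝ := fun i => if a ((i : ℕ) / 2) = i then 1 else 0 with hv
  -- the prediction at step t equals the one used in the construction
  have hpred : ∀ t, A t (lbCost k H) a = A t (lbCost k H) (lbActs k hk H A t) := by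
    intro t
    exact hA t _ _ _ _ (fun s _ => rfl) (fun s hs => (lbActs_agree k hk H A t s hs).symm)
  -- structure of a t for t < k/2
  have hat : ∀ t, t < k / 2 →
      ((a t : ℕ) = 2 * t ∨ (a t : ℕ) = 2 * t + 1) ∧ a t ≠ A t (lbCost k H) a := by
    intro t ht
    have h2t : 2 * t + 1 < k := by omega
    have hstep : a t = lbStep k hk H A t (lbActs k hk H A t) := by
      simp [ha, lbA, lbActs]
    rw [hstep, lbStep, dif_pos h2t]
    by_cases hc : A t (lbCost k H) (lbActs k hk H A t) = (⟨2 * t, by omega⟩ : Fin k)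
    · rw [if_pos hc]
      refine ⟨Or.inr rfl, ?_⟩
      rw [hpred t, hc]
      intro hcontra
      have := congrArg Fin.val hcontra
      simp at this
    · rw [if_neg hc]
      refine ⟨Or.inl rfl, ?_⟩
      rw [hpred t]
      intro hcontra
      exact hc hcontra.symm
  -- vstar of a t is 1
  have hvat : ∀ t, t < k / 2 → vstar (a t) = 1 := by
    intro t ht
    have := (hat t ht).1
    have hdiv : ((a t : ℕ)) / 2 = t := by omega
    simp [hv, hdiv]
  -- cost at a t is 0
  have hcat : ∀ t, t < k / 2 → lbCost k H t (a t) = 0 := by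
    intro t ht
    have := (hat t ht).1
    simp only [lbCost]
    rw [if_pos this]
  have hv01 : ∀ i, vstar i = 0 ∨ vstar i = 1 := by
    intro i
    by_cases h : a ((i : ℕ) / 2) = i
    · right; simp [hv, h]
    · left; simp [hv, h]
  have hvle1 : ∀ i, vstar i ≤ 1 := by
    intro i; rcases hv01 i with h | h <;> rw [h] <;> norm_num
  have hvge0 : ∀ i, 0 ≤ vstar i := by
    intro i; rcases hv01 i with h | h <;> rw [h] <;> norm_num
  have hcost0 : ∀ t i, 0 ≤ lbCost k H t i := by
    intro t i
    simp only [lbCost]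
    split
    · exact le_refl 0
    · linarith
  -- each value - cost ≤ 1
  have hle1 : ∀ t i, vstar i - lbCost k H t i ≤ 1 := by
    intro t i
    have := hvle1 i
    have := hcost0 t i
    linarith
  -- the sup equals 1 for t < k/2
  have hsup : ∀ t, t < k / 2 → (⨆ i, (vstar i - lbCost k H t i)) = 1 := by
    intro t ht
    apply le_antisymm
    · exact ciSup_le (hle1 t)
    · have h1 : vstar (a t) - lbCost k H t (a t) = 1 := by
        rw [hvat t ht, hcat t ht]; ring
      calc (1 : ℝ) = vstar (a t) - lbCost k H t (a t) := h1.symm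
        _ ≤ ⨆ i, (vstar i - lbCost k H t i) :=
            le_ciSup (f := fun i => vstar i - lbCost k H t i)
              (Set.Finite.bddAbove (Set.finite_range _)) (a t)
  refine ⟨vstar, a, hv01, ?_, ?_, ?_⟩
  · -- pair sums
    intro t ht h1 h2
    have hdiv1 : (2 * t) / 2 = t := by omega
    have hdiv2 : (2 * t + 1) / 2 = t := by omega
    rcases (hat t ht).1 with h | h
    · have e1 : a t = (⟨2 * t, h1⟩ : Fin k) := Fin.ext h
      have e2 : a t ≠ (⟨2 * t + 1, h2⟩ : Fin k) := by
        intro hc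
        have h2' : (a t : ℕ) = 2 * t + 1 := congrArg Fin.val hc
        omega
      simp only [hv, hdiv1, hdiv2]
      rw [if_pos e1, if_neg e2]; ring
    · have e1 : a t ≠ (⟨2 * t, h1⟩ : Fin k) := by
        intro hc
        have h1' : (a t : ℕ) = 2 * t := congrArg Fin.val hc
        omega
      have e2 : a t = (⟨2 * t + 1, h2⟩ : Fin k) := Fin.ext h
      simp only [hv, hdiv1, hdiv2]
      rw [if_neg e1, if_pos e2]; ring
  · -- agent zero regret
    intro t ht i
    have : vstar (a t) - lbCost k H t (a t) = 1 := by
      rw [hvat t ht, hcat t ht]; ring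
    rw [ge_iff_le, this]
    exact hle1 t i
  · -- prediction regret bound
    have hterm : ∀ t ∈ Finset.range (k / 2), (1 : ℝ) ≤
        (⨆ i, (vstar i - lbCost k H t i))
          - (vstar (A t (lbCost k H) a) - lbCost k H t (A t (lbCost k H) a)) := by
      intro t ht
      rw [Finset.mem_range] at ht
      rw [hsup t ht]
      set p := A t (lbCost k H) a with hp
      have hne : a t ≠ p := (hat t ht).2
      have hkey : vstar p ≤ lbCost k H t p := by
        by_cases hmem : (p : ℕ) = 2 * t ∨ (p : ℕ) = 2 * t + 1
        · have hdiv : ((p : ℕ)) / 2 = t := by omega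
          have : a t ≠ p := hne
          have hvp : vstar p = 0 := by
            simp only [hv, hdiv]
            rw [if_neg this]
          rw [hvp]
          exact hcost0 t p
        · have : lbCost k H t p = H := by simp only [lbCost]; rw [if_neg hmem]
          rw [this]
          have := hvle1 p
          linarith
      linarith
    calc (k : ℝ) / 4 ≤ (k / 2 : ℕ) := by
          rw [hk2]
          have : (2 * m) / 2 = m := by omega
          rw [this]
          push_cast
          linarith [Nat.cast_nonneg (α := ℝ) m]
      _ = (Finset.range (k / 2)).card • (1 : ℝ) := by simp
      _ ≤ ∑ t ∈ Finset.range (k / 2),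
            ((⨆ i, (vstar i - lbCost k H t i))
              - (vstar (A t (lbCost k H) a) - lbCost k H t (A t (lbCost k H) a))) :=
          Finset.card_nsmul_le_sum _ _ _ hterm
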